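/- arXiv:2002.11232 — 3 statements merged into one kernel-verified Lean document; each statement's English description precedes it below -/
import Mathlib

section
/- Let H be a central subgroup of a group G such that G admits an H-filtration {G_α} (a family of finite-index normal subgroups with trivial intersection and ⋂_α H·G_α = H). Set H_α := G_α ∩ H. Then for every subgroup N ≤ H containing some H_{α₀}, the family {G_α} is an N-filtration, i.e. ⋂_α N·G_α = N; consequently G/N is residually finite. -/
/-- A group is residually finite if every nontrivial element is avoided by some
finite-index normal subgroup. -/
def ResiduallyFinite (G : Type*) [Group G] : Prop :=
  ∀ g : G, g ≠ 1 → ∃ N : Subgroup G, N.Normal ∧ N.FiniteIndex ∧ g ∉ N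

theorem normal_of_le_center' {G : Type*} [Group G] (N : Subgroup G)
    (h : N ≤ Subgroup.center G) : N.Normal :=
  ⟨fun n hn g => by
    have hc := Subgroup.mem_center_iff.mp (h hn) g
    rwa [hc, mul_inv_cancel_right]⟩

/-- if `H` is central in `G` and `{G α}` is an `H`-filtration (finite-index
normal subgroups with trivial intersection and `⋂ α, H·G α = H`), then for every subgroup
`N ≤ H` containing some `H α₀ = G α₀ ∩ H`, the family `{G α}` is an `N`-filtration, i.e.
`⋂ α, N·G α = N`; consequently `G/N` is residually finite. -/
theorem statement1 {G : Type*} [Group G] (H : Subgroup G) (hcent : H ≤ Subgroup.center G)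
    {ι : Type*} (Gα : ι → Subgroup G)
    (hnorm : ∀ α, (Gα α).Normal) (hfi : ∀ α, (Gα α).FiniteIndex)
    (htriv : ⨅ α, Gα α = ⊥) (hfil : ⨅ α, (H ⊔ Gα α) = H)
    (N : Subgroup G) (hNH : N ≤ H) (α₀ : ι) (hα₀ : Gα α₀ ⊓ H ≤ N) :
    (⨅ α, (N ⊔ Gα α)) = N ∧
      (letI : N.Normal := normal_of_le_center' N (hNH.trans hcent)
       ResiduallyFinite (G ⧸ N)) := by
  have hinf : (⨅ α, (N ⊔ Gα α)) = N := by
    apply le_antisymm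
    · intro g hg
      simp only [Subgroup.mem_iInf] at hg
      have hgH : g ∈ H := by
        rw [← hfil, Subgroup.mem_iInf]
        exact fun α => sup_le_sup_right hNH (Gα α) (hg α)
      have hg0 : g ∈ N ⊔ Gα α₀ := hg α₀
      haveI := hnorm α₀
      rw [← SetLike.mem_coe, Subgroup.mul_normal] at hg0
      obtain ⟨n, hn, k, hk, rfl⟩ := hg0
      have hkH : k ∈ H := by
        have : (n : G)⁻¹ * (n * k) ∈ H := H.mul_mem (H.inv_mem (hNH hn)) hgH
        simpa using this
      exact N.mul_mem hn (hα₀ ⟨hk, hkH⟩)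
    · exact le_iInf fun α => le_sup_left
  refine ⟨hinf, ?_⟩
  letI : N.Normal := normal_of_le_center' N (hNH.trans hcent)
  intro g hg
  obtain ⟨g, rfl⟩ := QuotientGroup.mk_surjective g
  have hgN : g ∉ N := fun h => hg (by simpa [QuotientGroup.eq_one_iff] using h)
  have : ¬ g ∈ ⨅ α, (N ⊔ Gα α) := by rw [hinf]; exact hgN
  simp only [Subgroup.mem_iInf, not_forall] at this
  obtain ⟨α, hα⟩ := this
  haveI := hnorm α
  haveI := hfi α
  haveI : (N ⊔ Gα α).Normal := Subgroup.sup_normal N (Gα α)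
  refine ⟨(N ⊔ Gα α).map (QuotientGroup.mk' N), ?_, ?_, ?_⟩
  · exact Subgroup.Normal.map this _ (QuotientGroup.mk'_surjective N)
  · constructor
    rw [Subgroup.index_map_eq _ (QuotientGroup.mk'_surjective N)
      (by rw [QuotientGroup.ker_mk']; exact le_sup_left)]
    exact (Subgroup.finiteIndex_of_le (le_sup_right : Gα α ≤ N ⊔ Gα α)).index_ne_zero
  · rintro ⟨k, hk, hkg⟩
    apply hα
    have hmem : k⁻¹ * g ∈ N := (QuotientGroup.eq (s := N)).mp hkg
    have : g = k * (k⁻¹ * g) := by group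
    rw [this]
    exact (N ⊔ Gα α).mul_mem hk (le_sup_left (a := N) hmem)
end

section
/- If G is a residually finite group, H ≤ G a central subgroup, and G/H is residually finite, then G admits an H-filtration: there is a family {G_α} of finite-index normal subgroups of G with trivial intersection satisfying ⋂_α H·G_α = H. -/
/-- if `G` is residually finite, `H ≤ G` is central and `G/H` is residually
finite, then `G` admits an `H`-filtration: a family of finite-index normal subgroups with
trivial intersection such that `⋂ α, H·G α = H`. -/
theorem statement2 {G : Type u} [Group G] (hG : ResiduallyFinite G)
    (H : Subgroup G) (hcent : H ≤ Subgroup.center G)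
    (hquot : letI : H.Normal := normal_of_le_center' H hcent
             ResiduallyFinite (G ⧸ H)) :
    ∃ (ι : Type u) (Gα : ι → Subgroup G),
      (∀ α, (Gα α).Normal) ∧ (∀ α, (Gα α).FiniteIndex) ∧
      (⨅ α, Gα α) = ⊥ ∧ (⨅ α, (H ⊔ Gα α)) = H := by
  letI : H.Normal := normal_of_le_center' H hcent
  have key : ∀ g : G, g ≠ 1 → ∃ N : Subgroup G, N.Normal ∧ N.FiniteIndex ∧ g ∉ N ∧
      (g ∉ H → g ∉ H ⊔ N) := by
    intro g hg
    obtain ⟨M, hMn, hMf, hgM⟩ := hG g hg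
    by_cases hgH : g ∈ H
    · exact ⟨M, hMn, hMf, hgM, fun h => absurd hgH h⟩
    · have hq : (QuotientGroup.mk g : G ⧸ H) ≠ 1 := by
        simpa [QuotientGroup.eq_one_iff] using hgH
      obtain ⟨N', hNn, hNf, hgN⟩ := hquot _ hq
      set K := N'.comap (QuotientGroup.mk' H) with hK
      have hKn : K.Normal := hNn.comap _
      have hKf : K.FiniteIndex := by
        constructor
        rw [hK, Subgroup.index_comap_of_surjective _ (QuotientGroup.mk'_surjective H)]
        exact hNf.index_ne_zero
      have hHK : H ≤ K := fun h hh => by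
        simp only [hK, Subgroup.mem_comap, QuotientGroup.mk'_apply]
        rw [show (QuotientGroup.mk h : G ⧸ H) = 1 from (QuotientGroup.eq_one_iff h).2 hh]
        exact N'.one_mem
      have hgK : g ∉ K := fun h => hgN h
      haveI := hMn; haveI := hKn; haveI := hMf; haveI := hKf
      refine ⟨M ⊓ K, inferInstance, inferInstance, fun h => hgM h.1, fun _ h => ?_⟩
      have : H ⊔ (M ⊓ K) ≤ K := sup_le hHK inf_le_right
      exact hgK (this h)
  choose N hNn hNf hgN hgHN using key
  refine ⟨{g : G // g ≠ 1}, fun α => N α.1 α.2, fun α => hNn α.1 α.2,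
    fun α => hNf α.1 α.2, ?_, ?_⟩
  · refine le_antisymm ?_ bot_le
    intro x hx
    by_contra hx1
    have hx1' : x ≠ 1 := fun h => hx1 (h ▸ Subgroup.one_mem _)
    exact hgN x hx1' (Subgroup.mem_iInf.mp hx ⟨x, hx1'⟩)
  · refine le_antisymm ?_ (le_iInf fun α => le_sup_left)
    intro x hx
    by_contra hxH
    have hx1 : x ≠ 1 := fun h => hxH (h ▸ H.one_mem)
    exact hgHN x hx1 hxH (Subgroup.mem_iInf.mp hx ⟨x, hx1⟩)
end

section
/- Let H ≤ G₁ and H ≤ G₂ be a common central subgroup, G := G₁ ⊗_H G₂ the central product, and suppose G *_H G is residually finite (amalgamated free product of two copies of G over H). Then the amalgamated free product G₁ *_H G₂ is residually finite. -/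
variable {H : Type*} {G₁ G₂ : Type u} [Group H] [Group G₁] [Group G₂]

/-- The antidiagonal copy `{(h, h⁻¹) : h ∈ H}` of `H` in `G₁ × G₂` (as the normal subgroup
it generates; when `H` maps into the centers of `G₁` and `G₂` this is exactly the set
`{(f₁ h, (f₂ h)⁻¹)}`, which is then a central -- hence normal -- subgroup). -/
def centralKer (f₁ : H →* G₁) (f₂ : H →* G₂) : Subgroup (G₁ × G₂) :=
  Subgroup.normalClosure {p : G₁ × G₂ | ∃ h : H, p = (f₁ h, (f₂ h)⁻¹)}

instance centralKer_normal (f₁ : H →* G₁) (f₂ : H →* G₂) : (centralKer f₁ f₂).Normal :=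
  Subgroup.normalClosure_normal

/-- The central (tensor) product `G₁ ⊗_H G₂`: the quotient of `G₁ × G₂` by the
antidiagonal copy of `H`. -/
def CentralProduct (f₁ : H →* G₁) (f₂ : H →* G₂) : Type _ :=
  (G₁ × G₂) ⧸ centralKer f₁ f₂

instance (f₁ : H →* G₁) (f₂ : H →* G₂) : Group (CentralProduct f₁ f₂) :=
  inferInstanceAs (Group ((G₁ × G₂) ⧸ centralKer f₁ f₂))

/-- The canonical map `G₁ → G₁ ⊗_H G₂`. -/
def centralInl (f₁ : H →* G₁) (f₂ : H →* G₂) : G₁ →* CentralProduct f₁ f₂ :=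
  (QuotientGroup.mk' (centralKer f₁ f₂)).comp (MonoidHom.inl G₁ G₂)

/-- The canonical map `G₂ → G₁ ⊗_H G₂`. -/
def centralInr (f₁ : H →* G₁) (f₂ : H →* G₂) : G₂ →* CentralProduct f₁ f₂ :=
  (QuotientGroup.mk' (centralKer f₁ f₂)).comp (MonoidHom.inr G₁ G₂)

/-- The two-element family of groups `{G₁, G₂}`, used to form the amalgamated free
product `G₁ *_H G₂` as `Monoid.PushoutI`. -/
def fam (G₁ G₂ : Type u) : Bool → Type u := fun b => cond b G₁ G₂

instance famGroup (G₁ G₂ : Type u) [Group G₁] [Group G₂] : ∀ b, Group (fam G₁ G₂ b)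
  | true => inferInstanceAs (Group G₁)
  | false => inferInstanceAs (Group G₂)

/-- The pair of embeddings of the amalgamated subgroup into the two factors. -/
def famHom {H : Type*} {G₁ G₂ : Type u} [Group H] [Group G₁] [Group G₂]
    (f₁ : H →* G₁) (f₂ : H →* G₂) : ∀ b, H →* fam G₁ G₂ b
  | true => f₁
  | false => f₂

namespace Statement8Aux

open Monoid

/-- The antidiagonal homomorphism `h ↦ (f₁ h, (f₂ h)⁻¹)`. -/
def antidiag (f₁ : H →* G₁) (f₂ : H →* G₂) (hc₂ : f₂.range ≤ Subgroup.center G₂) :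
    H →* G₁ × G₂ where
  toFun h := (f₁ h, (f₂ h)⁻¹)
  map_one' := by simp
  map_mul' a b := by
    have hab : f₂ b * f₂ a = f₂ a * f₂ b :=
      Subgroup.mem_center_iff.mp (hc₂ ⟨a, rfl⟩) (f₂ b)
    ext
    · simp
    · simp only [map_mul, Prod.snd_mul, ← hab, mul_inv_rev]

theorem centralKer_eq (f₁ : H →* G₁) (f₂ : H →* G₂)
    (hc₁ : f₁.range ≤ Subgroup.center G₁) (hc₂ : f₂.range ≤ Subgroup.center G₂) :
    centralKer f₁ f₂ = (antidiag f₁ f₂ hc₂).range := by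
  have hle : (antidiag f₁ f₂ hc₂).range ≤ Subgroup.center (G₁ × G₂) := by
    rintro p ⟨h, rfl⟩
    rw [Subgroup.mem_center_iff]
    intro q
    have h1 : q.1 * f₁ h = f₁ h * q.1 := Subgroup.mem_center_iff.mp (hc₁ ⟨h, rfl⟩) q.1
    have h2 : f₂ h * q.2 = q.2 * f₂ h := (Subgroup.mem_center_iff.mp (hc₂ ⟨h, rfl⟩) q.2).symm
    have h2' : q.2 * (f₂ h)⁻¹ = (f₂ h)⁻¹ * q.2 := by
      rw [mul_inv_eq_iff_eq_mul, mul_assoc, ← h2, ← mul_assoc, inv_mul_cancel, one_mul]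
    ext
    · exact h1
    · exact h2'
  haveI : ((antidiag f₁ f₂ hc₂).range).Normal := normal_of_le_center' _ hle
  have hset : {p : G₁ × G₂ | ∃ h : H, p = (f₁ h, (f₂ h)⁻¹)} =
      ((antidiag f₁ f₂ hc₂).range : Set (G₁ × G₂)) := by
    ext p
    simp only [Set.mem_setOf_eq, SetLike.mem_coe, MonoidHom.mem_range]
    exact ⟨fun ⟨h, hp⟩ => ⟨h, hp.symm⟩, fun ⟨h, hp⟩ => ⟨h, hp.symm⟩⟩
  rw [centralKer, hset, Subgroup.normalClosure_eq_self]

theorem centralInl_injective (f₁ : H →* G₁) (f₂ : H →* G₂) (hf₂ : Function.Injective f₂)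
    (hc₁ : f₁.range ≤ Subgroup.center G₁) (hc₂ : f₂.range ≤ Subgroup.center G₂) :
    Function.Injective (centralInl f₁ f₂) := by
  intro x y hxy
  have : ((x, 1) : G₁ × G₂)⁻¹ * (y, 1) ∈ centralKer f₁ f₂ := QuotientGroup.eq.mp hxy
  rw [centralKer_eq f₁ f₂ hc₁ hc₂] at this
  obtain ⟨h, hh⟩ := this
  have hpair : f₁ h = x⁻¹ * y ∧ (f₂ h)⁻¹ = 1 := by
    simpa [antidiag, Prod.ext_iff] using hh
  have hh1 : h = 1 := hf₂ (by rw [map_one]; exact inv_eq_one.mp hpair.2)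
  have h1 := hpair.1
  rw [hh1, map_one] at h1
  exact inv_mul_eq_one.mp h1.symm

theorem centralInr_injective (f₁ : H →* G₁) (f₂ : H →* G₂) (hf₁ : Function.Injective f₁)
    (hc₁ : f₁.range ≤ Subgroup.center G₁) (hc₂ : f₂.range ≤ Subgroup.center G₂) :
    Function.Injective (centralInr f₁ f₂) := by
  intro x y hxy
  have : ((1, x) : G₁ × G₂)⁻¹ * (1, y) ∈ centralKer f₁ f₂ := QuotientGroup.eq.mp hxy
  rw [centralKer_eq f₁ f₂ hc₁ hc₂] at this
  obtain ⟨h, hh⟩ := this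
  have hpair : f₁ h = 1 ∧ (f₂ h)⁻¹ = x⁻¹ * y := by
    simpa [antidiag, Prod.ext_iff] using hh
  have hh1 : h = 1 := hf₁ (by rw [map_one]; exact hpair.1)
  have h2 := hpair.2
  rw [hh1, map_one, inv_one] at h2
  exact inv_mul_eq_one.mp h2.symm

theorem inr_f₂_eq_inl_f₁ (f₁ : H →* G₁) (f₂ : H →* G₂) (h : H) :
    centralInr f₁ f₂ (f₂ h) = centralInl f₁ f₂ (f₁ h) := by
  apply QuotientGroup.eq.mpr
  apply Subgroup.subset_normalClosure
  refine ⟨h, ?_⟩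
  ext
  · simp
  · simp

/-- The pair of maps `G₁ → G₁ ⊗_H G₂ ← G₂` as a map of families. -/
def toCP (f₁ : H →* G₁) (f₂ : H →* G₂) :
    ∀ b, fam G₁ G₂ b →* fam (CentralProduct f₁ f₂) (CentralProduct f₁ f₂) b
  | true => centralInl f₁ f₂
  | false => centralInr f₁ f₂

theorem isComplement_eq_one {G : Type*} [Group G] {K : Subgroup G} {S : Set G}
    (h : Subgroup.IsComplement (K : Set G) S) (h1 : (1 : G) ∈ S) {x : G}
    (hK : x ∈ K) (hS : x ∈ S) : x = 1 := by
  have e1 := h.equiv_fst_eq_self_of_mem_of_one_mem h1 (show x ∈ (K : Set G) from hK)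
  have e2 := h.equiv_fst_eq_one_of_mem_of_one_mem
    (show (1 : G) ∈ (K : Set G) from K.one_mem) hS
  have e3 := e1.symm.trans e2
  exact congrArg Subtype.val e3

end Statement8Aux

/-- let `H` be a common central subgroup of `G₁` and `G₂`, and
`G := G₁ ⊗_H G₂` the central product, into which `H` embeds via the common image of its
two copies. If the amalgamated free product `G *_H G` is residually finite, then so is
`G₁ *_H G₂`. -/
theorem statement8 (f₁ : H →* G₁) (f₂ : H →* G₂)
    (hf₁ : Function.Injective f₁) (hf₂ : Function.Injective f₂)
    (hc₁ : f₁.range ≤ Subgroup.center G₁) (hc₂ : f₂.range ≤ Subgroup.center G₂)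
    (hRF : ResiduallyFinite (Monoid.PushoutI
      (G := fam (CentralProduct f₁ f₂) (CentralProduct f₁ f₂))
      (famHom ((centralInl f₁ f₂).comp f₁) ((centralInl f₁ f₂).comp f₁)))) :
    ResiduallyFinite (Monoid.PushoutI (G := fam G₁ G₂) (famHom f₁ f₂)) := by
  classical
  open Monoid Statement8Aux in
  set g : H →* CentralProduct f₁ f₂ := (centralInl f₁ f₂).comp f₁ with hgdef
  have hinl : Function.Injective (centralInl f₁ f₂) :=
    centralInl_injective f₁ f₂ hf₂ hc₁ hc₂
  have hinr : Function.Injective (centralInr f₁ f₂) :=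
    centralInr_injective f₁ f₂ hf₁ hc₁ hc₂
  have hφ : ∀ b, Function.Injective (famHom f₁ f₂ b) := by
    intro b; cases b
    · exact hf₂
    · exact hf₁
  have hφ' : ∀ b, Function.Injective (famHom g g b) := by
    intro b; cases b <;> exact hinl.comp hf₁
  have hcompat : ∀ b, ((Monoid.PushoutI.of (φ := famHom g g) b).comp
      (toCP f₁ f₂ b)).comp (famHom f₁ f₂ b) = Monoid.PushoutI.base (famHom g g) := by
    intro b; cases b
    · ext h
      show Monoid.PushoutI.of (φ := famHom g g) false (centralInr f₁ f₂ (f₂ h)) = _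
      rw [inr_f₂_eq_inl_f₁]
      exact Monoid.PushoutI.of_apply_eq_base (famHom g g) false h
    · ext h
      exact Monoid.PushoutI.of_apply_eq_base (famHom g g) true h
  set Φ : Monoid.PushoutI (famHom f₁ f₂) →* Monoid.PushoutI (famHom g g) :=
    Monoid.PushoutI.lift _ _ hcompat with hΦdef
  -- Φ has trivial kernel
  have hker : ∀ x : Monoid.PushoutI (famHom f₁ f₂), Φ x = 1 → x = 1 := by
    intro x hx1
    obtain ⟨d⟩ := Monoid.PushoutI.NormalWord.transversal_nonempty (famHom f₁ f₂) hφ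
    set w : Monoid.PushoutI.NormalWord d := Monoid.PushoutI.NormalWord.equiv x with hw
    have hxw : w.prod = x := Monoid.PushoutI.NormalWord.equiv.symm_apply_apply x
    have hletters : ∀ l ∈ w.toList,
        (toCP f₁ f₂ l.1 l.2) ∉ (famHom g g l.1).range := by
      rintro ⟨i, a⟩ hmem ⟨h, hh⟩
      have hset := w.normalized i a hmem
      have hne := w.ne_one ⟨i, a⟩ hmem
      have haR : a ∈ ((famHom f₁ f₂ i)).range := by
        cases i
        · refine ⟨h, ?_⟩
          have hh' : centralInr f₁ f₂ (f₂ h) = centralInr f₁ f₂ a := by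
            rw [inr_f₂_eq_inl_f₁]; exact hh
          exact hinr hh'
        · exact ⟨h, hinl hh⟩
      exact hne (isComplement_eq_one (d.compl i) (d.one_mem i) haR hset)
    let w' : Monoid.CoprodI.Word (fam (CentralProduct f₁ f₂) (CentralProduct f₁ f₂)) :=
      { toList := w.toList.map (fun l => ⟨l.1, toCP f₁ f₂ l.1 l.2⟩),
        ne_one := by
          rintro l hl
          simp only [List.mem_map] at hl
          obtain ⟨l₀, hl₀, rfl⟩ := hl
          intro h1
          exact hletters l₀ hl₀ ⟨1, by simpa using h1.symm⟩
        chain_ne := by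
          rw [List.isChain_map]
          exact w.chain_ne }
    have hred : Monoid.PushoutI.Reduced (famHom g g) w' := by
      intro l hl
      simp only [w', List.mem_map] at hl
      obtain ⟨l₀, hl₀, rfl⟩ := hl
      exact hletters l₀ hl₀
    have hΦprod : Φ x = Monoid.PushoutI.base (famHom g g) w.head *
        Monoid.PushoutI.ofCoprodI w'.prod := by
      rw [← hxw]
      show Φ (Monoid.PushoutI.base (famHom f₁ f₂) w.head *
        Monoid.PushoutI.ofCoprodI w.toWord.prod) = _
      rw [map_mul]
      refine congrArg₂ (· * ·) ?_ ?_
      · have := Monoid.PushoutI.lift_base (fun b =>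
          (Monoid.PushoutI.of (φ := famHom g g) b).comp (toCP f₁ f₂ b))
          (Monoid.PushoutI.base (famHom g g)) hcompat w.head
        exact this
      · have hL : ∀ L : List (Σ b, fam G₁ G₂ b),
            Φ (Monoid.PushoutI.ofCoprodI
              (List.prod (L.map fun l => Monoid.CoprodI.of l.2))) =
            Monoid.PushoutI.ofCoprodI (List.prod ((L.map (fun l =>
              (⟨l.1, toCP f₁ f₂ l.1 l.2⟩ :
                Σ b, fam (CentralProduct f₁ f₂) (CentralProduct f₁ f₂) b))).map
              (fun l => Monoid.CoprodI.of l.2))) := by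
          intro L
          induction L with
          | nil => simp
          | cons a L ih =>
            simp only [List.map_cons, List.prod_cons, map_mul, ih]
            refine congrArg₂ (· * ·) ?_ rfl
            show Φ (Monoid.PushoutI.ofCoprodI (Monoid.CoprodI.of a.2)) =
              Monoid.PushoutI.ofCoprodI (Monoid.CoprodI.of (toCP f₁ f₂ a.1 a.2))
            rw [Monoid.PushoutI.ofCoprodI_of, Monoid.PushoutI.ofCoprodI_of, hΦdef,
              Monoid.PushoutI.lift_of]
            rfl
        exact hL w.toList
    have hmem : Monoid.PushoutI.ofCoprodI w'.prod ∈
        (Monoid.PushoutI.base (famHom g g)).range := by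
      refine ⟨w.head⁻¹, ?_⟩
      have h1 : Monoid.PushoutI.base (famHom g g) w.head *
          Monoid.PushoutI.ofCoprodI w'.prod = 1 := by rw [← hΦprod, hx1]
      rw [map_inv]
      exact inv_eq_of_mul_eq_one_right h1
    have hempty := hred.eq_empty_of_mem_range hφ' hmem
    have hnil : w.toList = [] := by
      have h2 : w'.toList = [] := congrArg Monoid.CoprodI.Word.toList hempty
      simpa only [w', List.map_eq_nil_iff] using h2
    have hxbase : x = Monoid.PushoutI.base (famHom f₁ f₂) w.head := by
      rw [← hxw, Monoid.PushoutI.NormalWord.prod]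
      have : w.toWord.prod = 1 := by
        rw [Monoid.CoprodI.Word.prod]
        have : w.toWord.toList = [] := hnil
        rw [this]; simp
      rw [this]; simp
    have hΦbase : Monoid.PushoutI.base (famHom g g) w.head = 1 := by
      rw [← hx1, hxbase, hΦdef]
      exact (Monoid.PushoutI.lift_base _ _ hcompat w.head).symm
    have hhead : w.head = 1 :=
      Monoid.PushoutI.base_injective hφ' (by rw [hΦbase, map_one])
    rw [hxbase, hhead, map_one]
  -- conclude
  intro x hx
  obtain ⟨N, hN, hNfi, hxN⟩ := hRF (Φ x) (fun h => hx (hker x h))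
  haveI := hN
  refine ⟨N.comap Φ, hN.comap Φ, ?_, by simpa [Subgroup.mem_comap] using hxN⟩
  constructor
  rw [Subgroup.index_comap]
  intro h0
  have hdvd : N.relIndex Φ.range ∣ N.index := Subgroup.relIndex_dvd_index_of_normal N Φ.range
  rw [h0] at hdvd
  exact hNfi.1 (Nat.eq_zero_of_zero_dvd hdvd)
end
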